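/- Let a ∈ [0,1) and define F_a(x,y) = (√(|y|² - |x|²|y|² + ⟨x,y⟩²) + a⟨x,y⟩)/(1-|x|²) on T𝔹ⁿ. Then the reversibility λ_{F_a}(𝔹ⁿ) = sup_{x ∈ 𝔹ⁿ, y ≠ 0} F_a(x,-y)/F_a(x,y) equals (1+a)/(1-a). -/

import Mathlib

open scoped RealInnerProductSpace

/-- The interpolated Funk-type metric `F_a` on the Euclidean unit ball `𝔹ⁿ`. -/
noncomputable def funkA (n : ℕ) (a : ℝ) (x y : EuclideanSpace ℝ (Fin n)) : ℝ :=
  (Real.sqrt (‖y‖ ^ 2 - ‖x‖ ^ 2 * ‖y‖ ^ 2 + ⟪x, y⟫ ^ 2) + a * ⟪x, y⟫) / (1 - ‖x‖ ^ 2)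

lemma funkA_ratio_mem (n : ℕ) (hn : 1 ≤ n) (a : ℝ) (ha0 : 0 ≤ a) (ha1 : a < 1)
    (r : ℝ) (hr0 : 0 ≤ r) (hr1 : r < 1) :
    (1 + a * r) / (1 - a * r) ∈ {t : ℝ | ∃ x y : EuclideanSpace ℝ (Fin n),
        ‖x‖ < 1 ∧ y ≠ 0 ∧ t = funkA n a x (-y) / funkA n a x y} := by
  set e : EuclideanSpace ℝ (Fin n) := EuclideanSpace.single (⟨0, hn⟩ : Fin n) (1 : ℝ) with he
  have hne : ‖e‖ = 1 := by
    rw [he, EuclideanSpace.norm_single]; simp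
  have hex : e ≠ 0 := by
    intro h; rw [h, norm_zero] at hne; norm_num at hne
  refine ⟨r • e, -e, ?_, by simpa using hex, ?_⟩
  · rw [norm_smul, hne]; simpa [abs_of_nonneg hr0] using hr1
  have hxn : ‖r • e‖ = r := by rw [norm_smul, hne]; simp [abs_of_nonneg hr0]
  have hinner : ⟪r • e, e⟫ = r := by
    rw [real_inner_smul_left, real_inner_self_eq_norm_sq, hne]; ring
  have hinner' : ⟪r • e, -e⟫ = -r := by rw [inner_neg_right, hinner]
  have h1 : funkA n a (r • e) (- -e) = (1 + a * r) / (1 - r ^ 2) := by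
    rw [funkA, neg_neg, hinner, hxn, hne]
    rw [show (1:ℝ) ^ 2 - r ^ 2 * (1:ℝ) ^ 2 + r ^ 2 = 1 by ring, Real.sqrt_one]
  have h2 : funkA n a (r • e) (-e) = (1 - a * r) / (1 - r ^ 2) := by
    rw [funkA, hinner', hxn, norm_neg, hne]
    rw [show (1:ℝ) ^ 2 - r ^ 2 * (1:ℝ) ^ 2 + (-r) ^ 2 = 1 by ring, Real.sqrt_one]
    ring
  rw [h1, h2]
  have hd : (1 : ℝ) - r ^ 2 ≠ 0 := by nlinarith
  have hb : (1 : ℝ) - a * r ≠ 0 := by nlinarith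
  field_simp

lemma funkA_ratio_le (n : ℕ) (a : ℝ) (ha0 : 0 ≤ a) (ha1 : a < 1)
    (x y : EuclideanSpace ℝ (Fin n)) (hx : ‖x‖ < 1) (hy : y ≠ 0) :
    funkA n a x (-y) / funkA n a x y ≤ (1 + a) / (1 - a) := by
  set s : ℝ := ⟪x, y⟫ with hs
  set Q : ℝ := Real.sqrt (‖y‖ ^ 2 - ‖x‖ ^ 2 * ‖y‖ ^ 2 + s ^ 2) with hQ
  have hyn : 0 < ‖y‖ := norm_pos_iff.mpr hy
  have hxn : 0 ≤ ‖x‖ := norm_nonneg x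
  have hD : 0 < 1 - ‖x‖ ^ 2 := by nlinarith
  have hin : 0 ≤ ‖y‖ ^ 2 - ‖x‖ ^ 2 * ‖y‖ ^ 2 + s ^ 2 := by nlinarith [sq_nonneg s]
  have hQ0 : 0 ≤ Q := Real.sqrt_nonneg _
  have hQ2 : Q ^ 2 = ‖y‖ ^ 2 - ‖x‖ ^ 2 * ‖y‖ ^ 2 + s ^ 2 := Real.sq_sqrt hin
  have hQs : s ^ 2 < Q ^ 2 := by nlinarith [mul_pos (pow_pos hyn 2) hD]
  have hsQ1 : -Q < s := by nlinarith [sq_nonneg (Q + s)]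
  have hsQ2 : s < Q := by nlinarith [sq_nonneg (Q - s)]
  have hQpos : 0 < Q := by nlinarith
  have hden : 0 < Q + a * s := by nlinarith
  have hnum : 0 < Q - a * s := by nlinarith
  have hfy : funkA n a x y = (Q + a * s) / (1 - ‖x‖ ^ 2) := rfl
  have hfny : funkA n a x (-y) = (Q - a * s) / (1 - ‖x‖ ^ 2) := by
    rw [funkA, inner_neg_right, norm_neg, ← hs, neg_sq, ← hQ]
    ring
  rw [hfy, hfny, div_div_div_cancel_right₀]
  · rw [div_le_div_iff₀ hden (by linarith)]
    nlinarith
  · exact ne_of_gt hD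

/-- For `a ∈ [0,1)`, the reversibility of `F_a` on `𝔹ⁿ` equals `(1+a)/(1-a)`. -/
theorem funkA_reversibility (n : ℕ) (hn : 1 ≤ n) (a : ℝ) (ha0 : 0 ≤ a) (ha1 : a < 1) :
    sSup {t : ℝ | ∃ x y : EuclideanSpace ℝ (Fin n),
        ‖x‖ < 1 ∧ y ≠ 0 ∧ t = funkA n a x (-y) / funkA n a x y}
      = (1 + a) / (1 - a) := by
  set S := {t : ℝ | ∃ x y : EuclideanSpace ℝ (Fin n),
      ‖x‖ < 1 ∧ y ≠ 0 ∧ t = funkA n a x (-y) / funkA n a x y} with hS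
  have hub : ∀ t ∈ S, t ≤ (1 + a) / (1 - a) := by
    rintro t ⟨x, y, hx, hy, rfl⟩
    exact funkA_ratio_le n a ha0 ha1 x y hx hy
  have hbdd : BddAbove S := ⟨(1 + a) / (1 - a), hub⟩
  have hne : S.Nonempty := ⟨_, funkA_ratio_mem n hn a ha0 ha1 0 le_rfl one_pos⟩
  refine le_antisymm (csSup_le hne hub) ?_
  set u : ℕ → ℝ := fun k => 1 - 1 / (k + 2 : ℝ) with hu
  have hk2 : ∀ k : ℕ, (2 : ℝ) ≤ (k : ℝ) + 2 := by
    intro k; have := Nat.cast_nonneg (α := ℝ) k; linarith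
  have hu0 : ∀ k, 0 ≤ u k := by
    intro k
    have : 1 / ((k : ℝ) + 2) ≤ 1 / 2 := one_div_le_one_div_of_le (by norm_num) (hk2 k)
    simp only [hu]; linarith
  have hu1 : ∀ k, u k < 1 := by
    intro k
    have : 0 < 1 / ((k : ℝ) + 2) := by positivity
    simp only [hu]; linarith
  have hulim : Filter.Tendsto u Filter.atTop (nhds 1) := by
    have h1 : Filter.Tendsto (fun k : ℕ => 1 / ((k : ℝ) + 2)) Filter.atTop (nhds 0) := by
      simpa [one_div, Pi.inv_def] using
        (Filter.tendsto_atTop_add_const_right _ (2 : ℝ)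
          tendsto_natCast_atTop_atTop).inv_tendsto_atTop
    have := Filter.Tendsto.sub (tendsto_const_nhds (x := (1:ℝ))) h1
    simpa [hu] using this
  have hflim : Filter.Tendsto (fun k => (1 + a * u k) / (1 - a * u k)) Filter.atTop
      (nhds ((1 + a * 1) / (1 - a * 1))) :=
    Filter.Tendsto.div ((hulim.const_mul a).const_add 1) ((hulim.const_mul a).const_sub 1)
      (by simp; linarith)
  have hle : (1 + a * 1) / (1 - a * 1) ≤ sSup S := by
    apply le_of_tendsto hflim
    filter_upwards with k
    exact le_csSup hbdd (funkA_ratio_mem n hn a ha0 ha1 (u k) (hu0 k) (hu1 k))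
  simpa using hle
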